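/- Let V be the upper probability on a measurable space (Ω,𝓕) generated by a nonempty set 𝒫 of finitely additive probabilities, assume V is continuous from below, and let θ : Ω → Ω be a measurable transformation preserving V. Consider the statements: (i) θ is ergodic with respect to V; (ii) for every B ∈ 𝓕 with V(θ⁻¹B △ B) = 0, either V(B) = 0 or V(Bᶜ) = 0; (iii) for every A ∈ 𝓕 with V(A) > 0, V((⋃_{n=1}^∞ θ^{−n}A)ᶜ) = 0; (iv) for all A, B ∈ 𝓕 with V(A) > 0 and V(B) > 0 there exists n ∈ ℕ with V(θ^{−n}A ∩ B) > 0. Then (i) and (ii) are equivalent, (iii) implies (iv), and (iv) implies (i). -/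

import Mathlib

open MeasureTheory Filter Topology Set

def IsFinAddProb {Ω : Type*} [MeasurableSpace Ω] (P : Set Ω → ℝ) : Prop :=
  P ∅ = 0 ∧ P Set.univ = 1 ∧
    (∀ A : Set Ω, MeasurableSet A → 0 ≤ P A ∧ P A ≤ 1) ∧
    (∀ A B : Set Ω, MeasurableSet A → MeasurableSet B → Disjoint A B →
      P (A ∪ B) = P A + P B)

def IsCapacity {Ω : Type*} [MeasurableSpace Ω] (μ : Set Ω → ℝ) : Prop :=
  μ ∅ = 0 ∧ μ Set.univ = 1 ∧
    ∀ A B : Set Ω, MeasurableSet A → MeasurableSet B → A ⊆ B → μ A ≤ μ B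

def ContBelow {Ω : Type*} [MeasurableSpace Ω] (μ : Set Ω → ℝ) : Prop :=
  ∀ A : ℕ → Set Ω, (∀ n, MeasurableSet (A n)) → Monotone A →
    Filter.Tendsto (fun n => μ (A n)) Filter.atTop (nhds (μ (⋃ n, A n)))

def ContAbove {Ω : Type*} [MeasurableSpace Ω] (μ : Set Ω → ℝ) : Prop :=
  ∀ A : ℕ → Set Ω, (∀ n, MeasurableSet (A n)) → Antitone A →
    Filter.Tendsto (fun n => μ (A n)) Filter.atTop (nhds (μ (⋂ n, A n)))

def ContAtEmpty {Ω : Type*} [MeasurableSpace Ω] (μ : Set Ω → ℝ) : Prop :=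
  ∀ A : ℕ → Set Ω, (∀ n, MeasurableSet (A n)) → Antitone A → (⋂ n, A n) = ∅ →
    Filter.Tendsto (fun n => μ (A n)) Filter.atTop (nhds 0)

def ContAtUniv {Ω : Type*} [MeasurableSpace Ω] (μ : Set Ω → ℝ) : Prop :=
  ∀ A : ℕ → Set Ω, (∀ n, MeasurableSet (A n)) → Monotone A → (⋃ n, A n) = Set.univ →
    Filter.Tendsto (fun n => μ (A n)) Filter.atTop (nhds 1)

def conjCap {Ω : Type*} (μ : Set Ω → ℝ) (A : Set Ω) : ℝ := 1 - μ Aᶜ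

noncomputable def choquet {Ω : Type*} (μ : Set Ω → ℝ) (ξ : Ω → ℝ) : ℝ :=
  (∫ t in Set.Ioi (0:ℝ), μ {ω | ξ ω ≥ t}) +
    (∫ t in Set.Iio (0:ℝ), (μ {ω | ξ ω ≥ t} - 1))

noncomputable def choquetE {Ω : Type*} (μ : Set Ω → ℝ) (ξ : Ω → EReal) : ℝ :=
  (∫ t in Set.Ioi (0:ℝ), μ {ω | (t : EReal) ≤ ξ ω}) +
    (∫ t in Set.Iio (0:ℝ), (μ {ω | (t : EReal) ≤ ξ ω} - 1))

def UpperProbOf {Ω : Type*} [MeasurableSpace Ω] (𝒮 : Set (Set Ω → ℝ)) (V : Set Ω → ℝ) : Prop :=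
  ∀ A : Set Ω, MeasurableSet A → V A = sSup ((fun P => P A) '' 𝒮)

def LowerProbOf {Ω : Type*} [MeasurableSpace Ω] (𝒮 : Set (Set Ω → ℝ)) (v : Set Ω → ℝ) : Prop :=
  ∀ A : Set Ω, MeasurableSet A → v A = sInf ((fun P => P A) '' 𝒮)

def ErgodicCap {Ω : Type*} [MeasurableSpace Ω] (μ : Set Ω → ℝ) (θ : Ω → Ω) : Prop :=
  ∀ B : Set Ω, MeasurableSet B → θ ⁻¹' B = B →
    (μ B = 0 ∨ μ B = 1) ∧ (μ B = 0 ∨ μ Bᶜ = 0)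

def PreservesCap {Ω : Type*} [MeasurableSpace Ω] (μ : Set Ω → ℝ) (θ : Ω → Ω) : Prop :=
  ∀ A : Set Ω, MeasurableSet A → μ (θ ⁻¹' A) = μ A

def IndepSigmaWrt {Ω : Type*} (μ : Set Ω → ℝ) (m₁ m₂ : MeasurableSpace Ω) : Prop :=
  ∀ A B : Set Ω, MeasurableSet[m₁] A → MeasurableSet[m₂] B → μ (A ∩ B) = μ A * μ B

theorem stmt12 {Ω : Type*} [MeasurableSpace Ω]
    (𝒮 : Set (Set Ω → ℝ)) (h𝒮 : 𝒮.Nonempty) (hP : ∀ P ∈ 𝒮, IsFinAddProb P)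
    (V : Set Ω → ℝ) (hV : UpperProbOf 𝒮 V) (hVb : ContBelow V)
    (θ : Ω → Ω) (hθ : Measurable θ) (hpres : PreservesCap V θ) :
    (ErgodicCap V θ ↔
      ∀ B : Set Ω, MeasurableSet B → V (symmDiff (θ ⁻¹' B) B) = 0 →
        (V B = 0 ∨ V Bᶜ = 0)) ∧
    ((∀ A : Set Ω, MeasurableSet A → 0 < V A →
        V ((⋃ n : ℕ, θ^[n + 1] ⁻¹' A)ᶜ) = 0) →
      (∀ A B : Set Ω, MeasurableSet A → MeasurableSet B → 0 < V A → 0 < V B →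
        ∃ n : ℕ, 0 < V (θ^[n + 1] ⁻¹' A ∩ B))) ∧
    ((∀ A B : Set Ω, MeasurableSet A → MeasurableSet B → 0 < V A → 0 < V B →
        ∃ n : ℕ, 0 < V (θ^[n + 1] ⁻¹' A ∩ B)) →
      ErgodicCap V θ) := by

  -- basic facts about V
  have hbdd : ∀ A : Set Ω, MeasurableSet A → BddAbove ((fun P => P A) '' 𝒮) := by
    intro A hA
    exact ⟨1, by rintro x ⟨P, hPm, rfl⟩; exact ((hP P hPm).2.2.1 A hA).2⟩
  have hne : ∀ A : Set Ω, ((fun P => P A) '' 𝒮).Nonempty := fun A => h𝒮.image _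
  have hVle : ∀ A : Set Ω, MeasurableSet A → ∀ c, (∀ P ∈ 𝒮, P A ≤ c) → V A ≤ c := by
    intro A hA c hc
    rw [hV A hA]
    exact csSup_le (hne A) (by rintro x ⟨P, hPm, rfl⟩; exact hc P hPm)
  have hleV : ∀ P ∈ 𝒮, ∀ A : Set Ω, MeasurableSet A → P A ≤ V A := by
    intro P hPm A hA
    rw [hV A hA]
    exact le_csSup (hbdd A hA) ⟨P, hPm, rfl⟩
  have hV0 : V ∅ = 0 := by
    obtain ⟨P, hPm⟩ := h𝒮
    refine le_antisymm (hVle ∅ MeasurableSet.empty 0 fun Q hQ => le_of_eq (hP Q hQ).1) ?_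
    rw [← (hP P hPm).1]
    exact hleV P hPm ∅ MeasurableSet.empty
  have hVnn : ∀ A : Set Ω, MeasurableSet A → 0 ≤ V A := by
    intro A hA
    obtain ⟨P, hPm⟩ := h𝒮
    exact le_trans ((hP P hPm).2.2.1 A hA).1 (hleV P hPm A hA)
  have hV1 : ∀ A : Set Ω, MeasurableSet A → V A ≤ 1 := fun A hA =>
    hVle A hA 1 fun P hPm => ((hP P hPm).2.2.1 A hA).2
  have hPmono : ∀ P ∈ 𝒮, ∀ A B : Set Ω, MeasurableSet A → MeasurableSet B → A ⊆ B →
      P A ≤ P B := by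
    intro P hPm A B hA hB hAB
    have h1 : P B = P A + P (B \ A) := by
      rw [← (hP P hPm).2.2.2 A (B \ A) hA (hB.diff hA) disjoint_sdiff_self_right,
        Set.union_diff_cancel hAB]
    have h2 : 0 ≤ P (B \ A) := ((hP P hPm).2.2.1 _ (hB.diff hA)).1
    linarith
  have hmono : ∀ A B : Set Ω, MeasurableSet A → MeasurableSet B → A ⊆ B → V A ≤ V B := by
    intro A B hA hB hAB
    exact hVle A hA _ fun P hPm => le_trans (hPmono P hPm A B hA hB hAB) (hleV P hPm B hB)
  have hsub : ∀ A B : Set Ω, MeasurableSet A → MeasurableSet B → V (A ∪ B) ≤ V A + V B := by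
    intro A B hA hB
    refine hVle _ (hA.union hB) _ fun P hPm => ?_
    have h1 : P (A ∪ B) = P A + P (B \ A) := by
      rw [← Set.union_diff_self]
      exact (hP P hPm).2.2.2 A (B \ A) hA (hB.diff hA) disjoint_sdiff_self_right
    have h2 : P (B \ A) ≤ V B :=
      le_trans (hPmono P hPm _ B (hB.diff hA) hB Set.diff_subset) (hleV P hPm B hB)
    have h3 : P A ≤ V A := hleV P hPm A hA
    linarith
  have hcompl : ∀ A : Set Ω, MeasurableSet A → 1 ≤ V A + V Aᶜ := by
    intro A hA
    obtain ⟨P, hPm⟩ := h𝒮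
    have h1 : P (A ∪ Aᶜ) = P A + P Aᶜ :=
      (hP P hPm).2.2.2 A Aᶜ hA hA.compl disjoint_compl_right
    rw [Set.union_compl_self, (hP P hPm).2.1] at h1
    have h2 : P A ≤ V A := hleV P hPm A hA
    have h3 : P Aᶜ ≤ V Aᶜ := hleV P hPm Aᶜ hA.compl
    linarith
  -- countable union of V-null sets is V-null
  have hnullU : ∀ A : ℕ → Set Ω, (∀ n, MeasurableSet (A n)) → (∀ n, V (A n) = 0) →
      V (⋃ n, A n) = 0 := by
    intro A hAm hA0
    have hmAcc : ∀ n, MeasurableSet (Set.accumulate A n) := fun n =>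
      MeasurableSet.biUnion (Set.to_countable _) fun k _ => hAm k
    have hAcc0 : ∀ n, V (Set.accumulate A n) = 0 := by
      intro n
      induction n with
      | zero =>
        have : Set.accumulate A 0 = A 0 := by
          ext x; simp [Set.mem_accumulate, Nat.le_zero]
        rw [this]; exact hA0 0
      | succ n ih =>
        refine le_antisymm ?_ (hVnn _ (hmAcc _))
        have hAccsucc : Set.accumulate A (n + 1) = Set.accumulate A n ∪ A (n + 1) := by
          ext x
          simp only [Set.mem_accumulate, Set.mem_union]
          constructor
          · rintro ⟨y, hy, hxy⟩
            rcases Nat.lt_or_ge y (n + 1) with h | h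
            · exact Or.inl ⟨y, by omega, hxy⟩
            · exact Or.inr (by rwa [show y = n + 1 by omega] at hxy)
          · rintro (⟨y, hy, hxy⟩ | hx)
            · exact ⟨y, by omega, hxy⟩
            · exact ⟨n + 1, le_rfl, hx⟩
        rw [hAccsucc]
        calc V (Set.accumulate A n ∪ A (n + 1))
            ≤ V (Set.accumulate A n) + V (A (n + 1)) := hsub _ _ (hmAcc n) (hAm _)
          _ = 0 := by rw [ih, hA0]; ring
    have h1 := hVb (fun n => Set.accumulate A n) hmAcc Set.monotone_accumulate
    rw [Set.iUnion_accumulate] at h1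
    have h2 : Filter.Tendsto (fun n => V (Set.accumulate A n)) Filter.atTop (nhds 0) := by
      simp only [hAcc0]; exact tendsto_const_nhds
    exact tendsto_nhds_unique h1 h2
  -- transfer along symmetric-difference-null
  have heq : ∀ X Y : Set Ω, MeasurableSet X → MeasurableSet Y →
      V (symmDiff X Y) = 0 → V X = V Y := by
    have key : ∀ X Y : Set Ω, MeasurableSet X → MeasurableSet Y →
        V (symmDiff X Y) = 0 → V X ≤ V Y := by
      intro X Y hX hY hXY
      have hm : MeasurableSet (symmDiff X Y) := hX.symmDiff hY
      have hss : X ⊆ Y ∪ symmDiff X Y := by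
        intro x hx
        by_cases h : x ∈ Y
        · exact Or.inl h
        · exact Or.inr (by rw [Set.mem_symmDiff]; exact Or.inl ⟨hx, h⟩)
      calc V X ≤ V (Y ∪ symmDiff X Y) := hmono _ _ hX (hY.union hm) hss
        _ ≤ V Y + V (symmDiff X Y) := hsub _ _ hY hm
        _ = V Y := by rw [hXY]; ring
    intro X Y hX hY hXY
    refine le_antisymm (key X Y hX hY hXY) (key Y X hY hX ?_)
    rwa [symmDiff_comm]
  have hθn : ∀ n : ℕ, Measurable (θ^[n]) := fun n => hθ.iterate n
  have hpresn : ∀ n : ℕ, ∀ A : Set Ω, MeasurableSet A → V (θ^[n] ⁻¹' A) = V A := by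
    intro n
    induction n with
    | zero => intro A hA; simp
    | succ n ih =>
      intro A hA
      rw [Function.iterate_succ, Set.preimage_comp, hpres _ (hθn n hA), ih A hA]
  refine ⟨⟨?_, ?_⟩, ?_, ?_⟩
  · -- (i) → (ii)
    intro herg B hB hsd
    have hmB : ∀ n : ℕ, MeasurableSet (θ^[n] ⁻¹' B) := fun n => hθn n hB
    have hDn : ∀ n : ℕ, V (symmDiff (θ^[n] ⁻¹' B) B) = 0 := by
      intro n
      induction n with
      | zero => simpa using hV0
      | succ n ih =>
        have hstep : symmDiff (θ^[n + 1] ⁻¹' B) (θ^[n] ⁻¹' B)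
            = θ^[n] ⁻¹' (symmDiff (θ ⁻¹' B) B) := by
          rw [Set.preimage_symmDiff]
          congr 1
          rw [Function.iterate_succ', Set.preimage_comp]
        have hVstep : V (symmDiff (θ^[n + 1] ⁻¹' B) (θ^[n] ⁻¹' B)) = 0 := by
          rw [hstep, hpresn n _ ((hθ hB).symmDiff hB)]
          exact hsd
        have htri : symmDiff (θ^[n + 1] ⁻¹' B) B ⊆
            symmDiff (θ^[n + 1] ⁻¹' B) (θ^[n] ⁻¹' B) ∪ symmDiff (θ^[n] ⁻¹' B) B :=
          symmDiff_triangle _ _ _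
        have hm1 : MeasurableSet (symmDiff (θ^[n + 1] ⁻¹' B) (θ^[n] ⁻¹' B)) :=
          (hmB (n + 1)).symmDiff (hmB n)
        have hm2 : MeasurableSet (symmDiff (θ^[n] ⁻¹' B) B) := (hmB n).symmDiff hB
        refine le_antisymm ?_ (hVnn _ ((hmB (n + 1)).symmDiff hB))
        calc V (symmDiff (θ^[n + 1] ⁻¹' B) B)
            ≤ V (symmDiff (θ^[n + 1] ⁻¹' B) (θ^[n] ⁻¹' B) ∪ symmDiff (θ^[n] ⁻¹' B) B) :=
              hmono _ _ ((hmB (n + 1)).symmDiff hB) (hm1.union hm2) htri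
          _ ≤ V (symmDiff (θ^[n + 1] ⁻¹' B) (θ^[n] ⁻¹' B)) + V (symmDiff (θ^[n] ⁻¹' B) B) :=
              hsub _ _ hm1 hm2
          _ = 0 := by rw [hVstep, ih]; ring
    set Bs : Set Ω := ⋂ m : ℕ, ⋃ k : ℕ, θ^[k + m] ⁻¹' B with hBsdef
    have hmBs : MeasurableSet Bs :=
      MeasurableSet.iInter fun m => MeasurableSet.iUnion fun k => hmB _
    have hmemBs : ∀ x : Ω, x ∈ Bs ↔ ∀ m : ℕ, ∃ k : ℕ, θ^[k + m] x ∈ B := by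
      intro x
      simp [hBsdef, Set.mem_iInter, Set.mem_iUnion]
    have hinv : θ ⁻¹' Bs = Bs := by
      ext x
      rw [Set.mem_preimage, hmemBs, hmemBs]
      constructor
      · intro h m
        obtain ⟨k, hk⟩ := h m
        refine ⟨k + 1, ?_⟩
        have he : θ^[k + 1 + m] x = θ^[k + m] (θ x) := by
          rw [show k + 1 + m = (k + m) + 1 by omega, Function.iterate_succ_apply]
        rw [he]; exact hk
      · intro h m
        obtain ⟨k, hk⟩ := h (m + 1)
        refine ⟨k, ?_⟩
        have he : θ^[k + (m + 1)] x = θ^[k + m] (θ x) := by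
          rw [show k + (m + 1) = (k + m) + 1 by omega, Function.iterate_succ_apply]
        rwa [he] at hk
    have hNnull : V (⋃ n : ℕ, symmDiff (θ^[n] ⁻¹' B) B) = 0 :=
      hnullU _ (fun n => (hmB n).symmDiff hB) hDn
    have hssN : symmDiff B Bs ⊆ ⋃ n : ℕ, symmDiff (θ^[n] ⁻¹' B) B := by
      intro x hx
      rw [Set.mem_symmDiff] at hx
      rcases hx with ⟨hxB, hxBs⟩ | ⟨hxBs, hxB⟩
      · rw [hmemBs] at hxBs
        push_neg at hxBs
        obtain ⟨m, hm⟩ := hxBs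
        refine Set.mem_iUnion.mpr ⟨m, ?_⟩
        rw [Set.mem_symmDiff]
        exact Or.inr ⟨hxB, by simpa using hm 0⟩
      · obtain ⟨k, hk⟩ := (hmemBs x).mp hxBs 0
        refine Set.mem_iUnion.mpr ⟨k, ?_⟩
        rw [Set.mem_symmDiff]
        exact Or.inl ⟨by simpa using hk, hxB⟩
    have hBBs : V (symmDiff B Bs) = 0 := by
      refine le_antisymm ?_ (hVnn _ (hB.symmDiff hmBs))
      calc V (symmDiff B Bs) ≤ V (⋃ n : ℕ, symmDiff (θ^[n] ⁻¹' B) B) :=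
            hmono _ _ (hB.symmDiff hmBs)
              (MeasurableSet.iUnion fun n => (hmB n).symmDiff hB) hssN
        _ = 0 := hNnull
    have hVBeq : V B = V Bs := heq B Bs hB hmBs hBBs
    have hVBceq : V Bᶜ = V Bsᶜ := by
      refine heq Bᶜ Bsᶜ hB.compl hmBs.compl ?_
      rw [compl_symmDiff_compl]
      exact hBBs
    rcases (herg Bs hmBs hinv).2 with h | h
    · exact Or.inl (by rw [hVBeq]; exact h)
    · exact Or.inr (by rw [hVBceq]; exact h)
  · -- (ii) → (i)
    intro h2 B hB hinv
    have h0 : V (symmDiff (θ ⁻¹' B) B) = 0 := by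
      rw [hinv, symmDiff_self]
      exact hV0
    have hd := h2 B hB h0
    refine ⟨?_, hd⟩
    rcases hd with h | h
    · exact Or.inl h
    · right
      have h1 := hcompl B hB
      have h2' := hV1 B hB
      linarith
  · -- (iii) → (iv)
    intro h3 A B hA hB hVA hVB
    have hmU : MeasurableSet (⋃ n : ℕ, θ^[n + 1] ⁻¹' A) :=
      MeasurableSet.iUnion fun n => hθn _ hA
    have h0 := h3 A hA hVA
    have hCmeas : ∀ n : ℕ, MeasurableSet (θ^[n + 1] ⁻¹' A ∩ B) := fun n =>
      (hθn _ hA).inter hB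
    have hBle : V B ≤ V (⋃ n : ℕ, θ^[n + 1] ⁻¹' A ∩ B) := by
      have hiU : (⋃ n : ℕ, θ^[n + 1] ⁻¹' A) ∩ B = ⋃ n : ℕ, θ^[n + 1] ⁻¹' A ∩ B := by
        rw [Set.iUnion_inter]
      have hss : B ⊆ ((⋃ n : ℕ, θ^[n + 1] ⁻¹' A) ∩ B) ∪ (⋃ n : ℕ, θ^[n + 1] ⁻¹' A)ᶜ := by
        intro x hx
        by_cases h : x ∈ ⋃ n : ℕ, θ^[n + 1] ⁻¹' A
        · exact Or.inl ⟨h, hx⟩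
        · exact Or.inr h
      calc V B ≤ V (((⋃ n : ℕ, θ^[n + 1] ⁻¹' A) ∩ B) ∪ (⋃ n : ℕ, θ^[n + 1] ⁻¹' A)ᶜ) :=
            hmono _ _ hB ((hmU.inter hB).union hmU.compl) hss
        _ ≤ V ((⋃ n : ℕ, θ^[n + 1] ⁻¹' A) ∩ B) + V ((⋃ n : ℕ, θ^[n + 1] ⁻¹' A)ᶜ) :=
            hsub _ _ (hmU.inter hB) hmU.compl
        _ = V (⋃ n : ℕ, θ^[n + 1] ⁻¹' A ∩ B) := by rw [h0, hiU]; ring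
    by_contra hcon
    push_neg at hcon
    have hz : ∀ n : ℕ, V (θ^[n + 1] ⁻¹' A ∩ B) = 0 := fun n =>
      le_antisymm (hcon n) (hVnn _ (hCmeas n))
    have hU0 : V (⋃ n : ℕ, θ^[n + 1] ⁻¹' A ∩ B) = 0 := hnullU _ hCmeas hz
    rw [hU0] at hBle
    linarith
  · -- (iv) → (i)
    intro h4 B hB hinv
    have hinvn : ∀ n : ℕ, θ^[n] ⁻¹' B = B := by
      intro n
      induction n with
      | zero => simp
      | succ n ih => rw [Function.iterate_succ, Set.preimage_comp, ih, hinv]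
    have key : V B = 0 ∨ V Bᶜ = 0 := by
      by_contra hcon
      push_neg at hcon
      obtain ⟨h1, h2⟩ := hcon
      have hVBpos : 0 < V B := lt_of_le_of_ne (hVnn B hB) (Ne.symm h1)
      have hVBc : 0 < V Bᶜ := lt_of_le_of_ne (hVnn _ hB.compl) (Ne.symm h2)
      obtain ⟨n, hn⟩ := h4 B Bᶜ hB hB.compl hVBpos hVBc
      rw [hinvn (n + 1), Set.inter_compl_self, hV0] at hn
      exact lt_irrefl 0 hn
    refine ⟨?_, key⟩
    rcases key with h | h
    · exact Or.inl h
    · right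
      have h1 := hcompl B hB
      have h2 := hV1 B hB
      linarith
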